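/- Let f : 2^X → ℝ≥0 be monotone and submodular, let γ ≥ 1, fix an ordered sequence of elements e₁, e₂, …, e_k of X, and let δᵢ = f({e₁,…,eᵢ}) − f({e₁,…,e_{i−1}}). Define f̃(S) := f(S) + (γ−1)·Σ_{i : eᵢ ∈ S} δᵢ. Then f̃ is a valid γ-perturbation of f; that is: (1) f̃ is monotone and submodular; (2) f(S) ≤ f̃(S) ≤ γ·f(S) for all S ⊆ X; and (3) 0 ≤ f̃_S(j) − f_S(j) ≤ (γ−1)·f({j}) for all S ⊆ X and j ∈ X \ S. -/

import Mathlib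

open Finset

/-- A downward-closed independence system on the finite type `α`. -/
def DownClosed {α : Type*} (I : Finset α → Prop) : Prop :=
  I ∅ ∧ ∀ A B : Finset α, I A → B ⊆ A → I B
/-- Monotonicity of a set function. -/
def MonotoneFn {α : Type*} (f : Finset α → ℝ) : Prop :=
  ∀ A B : Finset α, A ⊆ B → f A ≤ f B

/-- Submodularity of a set function. -/
def SubmodularFn {α : Type*} [DecidableEq α] (f : Finset α → ℝ) : Prop :=
  ∀ A B : Finset α, f (A ∪ B) + f (A ∩ B) ≤ f A + f B

/-- `f'` is a `γ`-perturbation of the monotone submodular function `f`. -/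
def IsPerturbation {α : Type*} [DecidableEq α] (γ : ℝ) (f f' : Finset α → ℝ) : Prop :=
  (∀ S : Finset α, 0 ≤ f' S) ∧ MonotoneFn f' ∧ SubmodularFn f' ∧
  (∀ S : Finset α, f S ≤ f' S ∧ f' S ≤ γ * f S) ∧
  ∀ S : Finset α, ∀ j ∉ S,
    f (insert j S) - f S ≤ f' (insert j S) - f' S ∧
    (f' (insert j S) - f' S) - (f (insert j S) - f S) ≤ (γ - 1) * f {j}

section Aux
variable {α : Type*} [DecidableEq α]

/-- The boosted marginal sum. -/
def gsum (f : Finset α → ℝ) (l : List α) (S : Finset α) : ℝ :=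
  ∑ i : Fin l.length,
    if l.get i ∈ S then
      f (l.take (i.val + 1)).toFinset - f (l.take i.val).toFinset
    else 0

variable {f : Finset α → ℝ}

lemma marg_mono (hmono : MonotoneFn f) (hsub : SubmodularFn f)
    {T P : Finset α} (hTP : T ⊆ P) (e : α) :
    f (insert e P) - f P ≤ f (insert e T) - f T := by
  have h := hsub (insert e T) P
  have h1 : insert e T ∪ P = insert e P := by
    rw [Finset.insert_union, Finset.union_eq_right.mpr hTP]
  have h2 : T ⊆ insert e T ∩ P := Finset.subset_inter (Finset.subset_insert _ _) hTP
  have h3 := hmono _ _ h2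
  rw [h1] at h
  linarith

lemma take_toFinset_succ (l : List α) (n : ℕ) (h : n < l.length) :
    (l.take (n+1)).toFinset = insert (l.get ⟨n, h⟩) (l.take n).toFinset := by
  rw [← List.take_concat_get h, List.concat_eq_append, List.toFinset_append]
  ext x; simp [or_comm]

lemma delta_nonneg (hmono : MonotoneFn f) (l : List α) (n : ℕ) :
    0 ≤ f (l.take (n+1)).toFinset - f (l.take n).toFinset := by
  have hsub' : (l.take n).toFinset ⊆ (l.take (n+1)).toFinset := by
    intro x hx
    rw [List.mem_toFinset] at hx ⊢
    have : l.take n = (l.take (n+1)).take n := by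
      rw [List.take_take]; simp
    rw [this] at hx
    exact List.take_subset _ _ hx
  linarith [hmono _ _ hsub']

lemma key_telescope (hmono : MonotoneFn f)
    (hsub : SubmodularFn f) (l : List α) (S : Finset α) :
    ∀ n, n ≤ l.length →
      ∑ i ∈ Finset.range n, (if h : i < l.length then
          (if l.get ⟨i, h⟩ ∈ S then f (l.take (i+1)).toFinset - f (l.take i).toFinset else 0)
        else 0) ≤ f (S ∩ (l.take n).toFinset) - f ∅ := by
  intro n hn
  induction n with
  | zero => simp
  | succ n ih =>
    have hlt : n < l.length := hn
    rw [Finset.sum_range_succ, dif_pos hlt]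
    have ihe := ih (le_of_lt hlt)
    set e := l.get ⟨n, hlt⟩ with he
    have hins := take_toFinset_succ l n hlt
    by_cases hes : e ∈ S
    · rw [if_pos hes]
      have hinter : S ∩ (l.take (n+1)).toFinset = insert e (S ∩ (l.take n).toFinset) := by
        rw [hins, Finset.inter_comm, Finset.insert_inter_of_mem hes, Finset.inter_comm]
      have hmarg := marg_mono hmono hsub
        (Finset.inter_subset_right : S ∩ (l.take n).toFinset ⊆ _) e
      rw [hins] at *
      rw [hinter]
      linarith
    · rw [if_neg hes]
      have hinter : S ∩ (l.take (n+1)).toFinset = S ∩ (l.take n).toFinset := by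
        rw [hins, Finset.inter_comm, Finset.insert_inter_of_notMem hes, Finset.inter_comm]
      rw [hinter]
      linarith

lemma gsum_le (hf0 : ∀ S : Finset α, 0 ≤ f S) (hmono : MonotoneFn f)
    (hsub : SubmodularFn f) (l : List α) (S : Finset α) :
    gsum f l S ≤ f S := by
  have h1 : gsum f l S
      = ∑ i ∈ Finset.range l.length, (if h : i < l.length then
          (if l.get ⟨i, h⟩ ∈ S then f (l.take (i+1)).toFinset - f (l.take i).toFinset else 0)
        else 0) := by
    rw [gsum, ← Fin.sum_univ_eq_sum_range (fun i => if h : i < l.length then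
          (if l.get ⟨i, h⟩ ∈ S then f (l.take (i+1)).toFinset - f (l.take i).toFinset else 0)
        else 0) l.length]
    exact Finset.sum_congr rfl fun i _ => by rw [dif_pos i.isLt]
  rw [h1]
  have h2 := key_telescope hmono hsub l S l.length le_rfl
  have h3 : S ∩ (l.take l.length).toFinset ⊆ S := by
    rw [List.take_length]; exact Finset.inter_subset_left
  linarith [hmono _ _ h3, hf0 (∅ : Finset α)]

lemma gsum_nonneg (hmono : MonotoneFn f) (l : List α) (S : Finset α) :
    0 ≤ gsum f l S :=
  Finset.sum_nonneg fun i _ => by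
    split
    · exact delta_nonneg hmono l i.val
    · exact le_rfl

lemma gsum_mono (hmono : MonotoneFn f) (l : List α) {A B : Finset α} (hAB : A ⊆ B) :
    gsum f l A ≤ gsum f l B :=
  Finset.sum_le_sum fun i _ => by
    by_cases hA : l.get i ∈ A
    · rw [if_pos hA, if_pos (hAB hA)]
    · rw [if_neg hA]
      split
      · exact delta_nonneg hmono l i.val
      · exact le_rfl

lemma gsum_add (l : List α) (A B : Finset α) :
    gsum f l (A ∪ B) + gsum f l (A ∩ B) = gsum f l A + gsum f l B := by
  rw [gsum, gsum, gsum, gsum, ← Finset.sum_add_distrib, ← Finset.sum_add_distrib]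
  refine Finset.sum_congr rfl fun i _ => ?_
  simp only [List.get_eq_getElem]
  by_cases hA : l[i.val] ∈ A <;> by_cases hB : l[i.val] ∈ B <;>
    simp [Finset.mem_union, Finset.mem_inter, hA, hB]

lemma gsum_insert_diff_le (hmono : MonotoneFn f) (l : List α) {S : Finset α} {j : α}
    (hj : j ∉ S) :
    gsum f l (insert j S) - gsum f l S ≤ gsum f l {j} := by
  rw [gsum, gsum, gsum, ← Finset.sum_sub_distrib]
  refine Finset.sum_le_sum fun i _ => ?_
  simp only [List.get_eq_getElem, Finset.mem_insert, Finset.mem_singleton]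
  by_cases hiS : l[i.val] ∈ S <;> by_cases hij : l[i.val] = j <;>
    simp [hiS, hij, hj] <;>
    linarith [delta_nonneg hmono l i.val]

end Aux

/-- Boosting the marginal gains `δᵢ` along a fixed ordered sequence of
elements by a factor `γ − 1` yields a valid `γ`-perturbation of a nonnegative monotone
submodular function `f`. -/
theorem marginal_boost_isPerturbation
    {α : Type*} [Fintype α] [DecidableEq α]
    (f : Finset α → ℝ) (hf0 : ∀ S : Finset α, 0 ≤ f S)
    (hmono : MonotoneFn f) (hsub : SubmodularFn f)
    (γ : ℝ) (hγ : 1 ≤ γ) (l : List α) :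
    IsPerturbation γ f (fun S =>
      f S + (γ - 1) * ∑ i : Fin l.length,
        if l.get i ∈ S then
          f (l.take (i.val + 1)).toFinset - f (l.take i.val).toFinset
        else 0) := by
  show IsPerturbation γ f (fun S => f S + (γ - 1) * gsum f l S)
  have hγ' : 0 ≤ γ - 1 := by linarith
  refine ⟨?_, ?_, ?_, ?_, ?_⟩
  · intro S
    have := gsum_nonneg hmono l S
    have := hf0 S
    have := mul_nonneg hγ' (gsum_nonneg hmono l S)
    simp only
    linarith
  · intro A B hAB
    simp only
    have h1 := hmono A B hAB
    have h2 := mul_le_mul_of_nonneg_left (gsum_mono hmono l hAB) hγ'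
    linarith
  · intro A B
    simp only
    have h1 := hsub A B
    have h2 : (γ - 1) * gsum f l (A ∪ B) + (γ - 1) * gsum f l (A ∩ B)
        = (γ - 1) * gsum f l A + (γ - 1) * gsum f l B := by
      rw [← mul_add, ← mul_add, gsum_add]
    linarith
  · intro S
    simp only
    constructor
    · have := mul_nonneg hγ' (gsum_nonneg hmono l S)
      linarith
    · have h1 := mul_le_mul_of_nonneg_left (gsum_le hf0 hmono hsub l S) hγ'
      have h2 : (γ - 1) * f S = γ * f S - f S := by ring
      linarith
  · intro S j hj
    simp only
    have hd0 : 0 ≤ gsum f l (insert j S) - gsum f l S := by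
      have := gsum_mono hmono l (Finset.subset_insert j S)
      linarith
    have hd1 : gsum f l (insert j S) - gsum f l S ≤ f {j} :=
      le_trans (gsum_insert_diff_le hmono l hj) (gsum_le hf0 hmono hsub l {j})
    constructor
    · nlinarith
    · nlinarith [mul_le_mul_of_nonneg_left hd1 hγ']
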